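/- Let (x, v) : ℤ² → ℝ³ × ℝ³ with |v(u)| = 1 be a principal contact element net: for every u ∈ ℤ² and i ∈ {1,2} there exist c ∈ ℝ³ and r ∈ ℝ with c = x(u) + r·v(u) and c = x(u+e_i) + r·v(u+e_i). Fix u ∈ ℤ² and suppose that the four points x(u), x(u+e₁), x(u+e₁+e₂), x(u+e₂) are pairwise distinct, that no three of them are collinear, and that at each of the four vertices of the quadrilateral the principal curvature spheres (c, r) of the two edges adjacent to that vertex are distinct. Then the four points x(u), x(u+e₁), x(u+e₁+e₂), x(u+e₂) are concyclic. (The points of a principal contact element net form a circular net.) -/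

import Mathlib

open EuclideanGeometry

set_option maxHeartbeats 1000000

open RealInnerProductSpace in
private lemma pcen_key {E : Type*} [NormedAddCommGroup E] [InnerProductSpace ℝ E]
    (a b c d : E) (r s t w : ℝ)
    (ha : ⟪a,a⟫ = 1) (hb : ⟪b,b⟫ = 1) (hc : ⟪c,c⟫ = 1) (hd : ⟪d,d⟫ = 1)
    (hrel : (r-w)•a + (s-r)•b + (t-s)•c + (w-t)•d = 0) :
    r*s*(w-t)*‖w•a - w•d‖^2 + w*t*(s-r)*‖r•a - r•b‖^2
      + w*r*(t-s)*‖r•a + (s-r)•b - s•c‖^2 = 0 := by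
  have Ca := congrArg (fun y => ⟪y, a⟫) hrel
  have Cb := congrArg (fun y => ⟪y, b⟫) hrel
  have Cc := congrArg (fun y => ⟪y, c⟫) hrel
  have Cd := congrArg (fun y => ⟪y, d⟫) hrel
  simp only [inner_add_left, real_inner_smul_left, inner_zero_left,
    real_inner_comm a b, real_inner_comm a c, real_inner_comm a d,
    real_inner_comm b c, real_inner_comm b d, real_inner_comm c d,
    ha, hb, hc, hd] at Ca Cb Cc Cd
  have eB : ‖r•a - r•b‖^2 = r^2 - 2*r^2*⟪a,b⟫ + r^2 := by
    rw [← real_inner_self_eq_norm_sq]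
    simp only [inner_sub_left, inner_sub_right, real_inner_smul_left,
      real_inner_smul_right, real_inner_comm a b, ha, hb]
    ring
  have eD : ‖w•a - w•d‖^2 = w^2 - 2*w^2*⟪a,d⟫ + w^2 := by
    rw [← real_inner_self_eq_norm_sq]
    simp only [inner_sub_left, inner_sub_right, real_inner_smul_left,
      real_inner_smul_right, real_inner_comm a d, ha, hd]
    ring
  have eC : ‖r•a + (s-r)•b - s•c‖^2
      = r^2 + (s-r)^2 + s^2 + 2*r*(s-r)*⟪a,b⟫ - 2*r*s*⟪a,c⟫
        - 2*(s-r)*s*⟪b,c⟫ := by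
    rw [← real_inner_self_eq_norm_sq]
    simp only [inner_sub_left, inner_sub_right, inner_add_left, inner_add_right,
      real_inner_smul_left, real_inner_smul_right, real_inner_comm a b,
      real_inner_comm a c, real_inner_comm b c, ha, hb, hc]
    ring
  linear_combination (r*s*(w-t))*eD + (w*t*(s-r))*eB + (w*r*(t-s))*eC
    + (-(r*s*w*(r+w)))*Ca + (-(r*s*w*(s-r)))*Cb + (-(r*s*w*(t-s)))*Cc
    + (r*s*w*(w-t))*Cd

open RealInnerProductSpace in

/-- **The points of a principal contact element net form a circular net.**
Let `(x, v) : ℤ² → ℝ³ × S²` be a principal contact element net: any two neighboring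
contact elements share an inscribed sphere (`c = x + r • v` for both). If at some
`u ∈ ℤ²` the four points of the elementary quadrilateral are pairwise distinct, no
three of them are collinear, and at each vertex the principal curvature spheres of
the two adjacent edges are distinct, then the four points are concyclic. -/
theorem points_of_principal_net_are_circular
    (x v : ℤ × ℤ → EuclideanSpace ℝ (Fin 3))
    (hunit : ∀ u : ℤ × ℤ, ‖v u‖ = 1)
    (hprin1 : ∀ u : ℤ × ℤ, ∃ (c : EuclideanSpace ℝ (Fin 3)) (r : ℝ),
        c = x u + r • v u ∧ c = x (u.1 + 1, u.2) + r • v (u.1 + 1, u.2))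
    (hprin2 : ∀ u : ℤ × ℤ, ∃ (c : EuclideanSpace ℝ (Fin 3)) (r : ℝ),
        c = x u + r • v u ∧ c = x (u.1, u.2 + 1) + r • v (u.1, u.2 + 1))
    (u : ℤ × ℤ)
    -- the four vertices of the elementary quadrilateral at u are pairwise distinct
    (hd1 : x u ≠ x (u.1 + 1, u.2)) (hd2 : x u ≠ x (u.1 + 1, u.2 + 1))
    (hd3 : x u ≠ x (u.1, u.2 + 1)) (hd4 : x (u.1 + 1, u.2) ≠ x (u.1 + 1, u.2 + 1))
    (hd5 : x (u.1 + 1, u.2) ≠ x (u.1, u.2 + 1))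
    (hd6 : x (u.1 + 1, u.2 + 1) ≠ x (u.1, u.2 + 1))
    -- no three of the four vertices are collinear
    (hc1 : ¬ Collinear ℝ
      ({x u, x (u.1 + 1, u.2), x (u.1 + 1, u.2 + 1)} : Set (EuclideanSpace ℝ (Fin 3))))
    (hc2 : ¬ Collinear ℝ
      ({x u, x (u.1 + 1, u.2), x (u.1, u.2 + 1)} : Set (EuclideanSpace ℝ (Fin 3))))
    (hc3 : ¬ Collinear ℝ
      ({x u, x (u.1 + 1, u.2 + 1), x (u.1, u.2 + 1)} : Set (EuclideanSpace ℝ (Fin 3))))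
    (hc4 : ¬ Collinear ℝ
      ({x (u.1 + 1, u.2), x (u.1 + 1, u.2 + 1), x (u.1, u.2 + 1)} :
        Set (EuclideanSpace ℝ (Fin 3))))
    -- at each vertex, the principal curvature spheres of the two adjacent edges differ
    (hv00 : ∀ (c : EuclideanSpace ℝ (Fin 3)) (r : ℝ) (c' : EuclideanSpace ℝ (Fin 3)) (r' : ℝ),
      (c = x u + r • v u ∧ c = x (u.1 + 1, u.2) + r • v (u.1 + 1, u.2)) →
      (c' = x u + r' • v u ∧ c' = x (u.1, u.2 + 1) + r' • v (u.1, u.2 + 1)) →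
      (c, r) ≠ (c', r'))
    (hv10 : ∀ (c : EuclideanSpace ℝ (Fin 3)) (r : ℝ) (c' : EuclideanSpace ℝ (Fin 3)) (r' : ℝ),
      (c = x u + r • v u ∧ c = x (u.1 + 1, u.2) + r • v (u.1 + 1, u.2)) →
      (c' = x (u.1 + 1, u.2) + r' • v (u.1 + 1, u.2) ∧
        c' = x (u.1 + 1, u.2 + 1) + r' • v (u.1 + 1, u.2 + 1)) →
      (c, r) ≠ (c', r'))
    (hv01 : ∀ (c : EuclideanSpace ℝ (Fin 3)) (r : ℝ) (c' : EuclideanSpace ℝ (Fin 3)) (r' : ℝ),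
      (c = x u + r • v u ∧ c = x (u.1, u.2 + 1) + r • v (u.1, u.2 + 1)) →
      (c' = x (u.1, u.2 + 1) + r' • v (u.1, u.2 + 1) ∧
        c' = x (u.1 + 1, u.2 + 1) + r' • v (u.1 + 1, u.2 + 1)) →
      (c, r) ≠ (c', r'))
    (hv11 : ∀ (c : EuclideanSpace ℝ (Fin 3)) (r : ℝ) (c' : EuclideanSpace ℝ (Fin 3)) (r' : ℝ),
      (c = x (u.1 + 1, u.2) + r • v (u.1 + 1, u.2) ∧
        c = x (u.1 + 1, u.2 + 1) + r • v (u.1 + 1, u.2 + 1)) →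
      (c' = x (u.1, u.2 + 1) + r' • v (u.1, u.2 + 1) ∧
        c' = x (u.1 + 1, u.2 + 1) + r' • v (u.1 + 1, u.2 + 1)) →
      (c, r) ≠ (c', r')) :
    Concyclic ({x u, x (u.1 + 1, u.2), x (u.1 + 1, u.2 + 1), x (u.1, u.2 + 1)} :
      Set (EuclideanSpace ℝ (Fin 3))) := by
  obtain ⟨p, r, hp1, hp2⟩ := hprin1 u
  obtain ⟨q, s, hq1, hq2⟩ := hprin2 (u.1 + 1, u.2)
  obtain ⟨m, t, hm1, hm2⟩ := hprin1 (u.1, u.2 + 1)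
  obtain ⟨n, w, hn1, hn2⟩ := hprin2 u
  set A := x u with hA_def
  set B := x (u.1 + 1, u.2) with hB_def
  set C := x (u.1 + 1, u.2 + 1) with hC_def
  set D := x (u.1, u.2 + 1) with hD_def
  set a := v u with ha_def
  set b := v (u.1 + 1, u.2) with hb_def
  set c := v (u.1 + 1, u.2 + 1) with hc_def
  set d := v (u.1, u.2 + 1) with hd_def
  have hq1' : q = B + s • b := hq1
  have hq2' : q = C + s • c := hq2
  have hm1' : m = D + t • d := hm1
  have hm2' : m = C + t • c := hm2
  -- nonzero radii
  have hr0 : r ≠ 0 := by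
    intro h; subst h
    rw [zero_smul, add_zero] at hp1 hp2
    exact hd1 (hp1.symm.trans hp2)
  have hs0 : s ≠ 0 := by
    intro h; subst h
    rw [zero_smul, add_zero] at hq1' hq2'
    exact hd4 (hq1'.symm.trans hq2')
  have ht0 : t ≠ 0 := by
    intro h; subst h
    rw [zero_smul, add_zero] at hm1' hm2'
    exact hd6 (hm2'.symm.trans hm1')
  have hw0 : w ≠ 0 := by
    intro h; subst h
    rw [zero_smul, add_zero] at hn1 hn2
    exact hd3 (hn1.symm.trans hn2)
  -- distinct radii at the four vertices
  have hrs : s ≠ r := by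
    intro h
    exact hv10 p r q s ⟨hp1, hp2⟩ ⟨hq1', hq2'⟩ (by rw [hp2, hq1', h])
  have hrw : r ≠ w := by
    intro h
    exact hv00 p r n w ⟨hp1, hp2⟩ ⟨hn1, hn2⟩ (by rw [hp1, hn1, h])
  have hwt : w ≠ t := by
    intro h
    exact hv01 n w m t ⟨hn1, hn2⟩ ⟨hm1', hm2'⟩ (by rw [hn2, hm1', h])
  have hts : t ≠ s := by
    intro h
    exact hv11 q s m t ⟨hq1', hq2'⟩ ⟨hm1', hm2'⟩ (by rw [hq2', hm2', h])
  -- edge equations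
  have hAB : A + r • a = B + r • b := hp1.symm.trans hp2
  have hBC : B + s • b = C + s • c := hq1'.symm.trans hq2'
  have hDC : D + t • d = C + t • c := hm1'.symm.trans hm2'
  have hAD : A + w • a = D + w • d := hn1.symm.trans hn2
  have e1 : B = A + r•a - r•b := by rw [eq_sub_iff_add_eq]; exact hAB.symm
  have e2 : C = B + s•b - s•c := by rw [eq_sub_iff_add_eq]; exact hBC.symm
  have e3 : C = D + t•d - t•c := by rw [eq_sub_iff_add_eq]; exact hDC.symm
  have e4 : D = A + w•a - w•d := by rw [eq_sub_iff_add_eq]; exact hAD.symm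
  have hrel : (r-w)•a + (s-r)•b + (t-s)•c + (w-t)•d = 0 := by
    have h5 : A + r•a - r•b + s•b - s•c = A + w•a - w•d + t•d - t•c := by
      rw [← e1, ← e2, e3, e4]
    linear_combination (norm := module) h5
  -- unit inner products
  have haa : ⟪a, a⟫ = 1 := by rw [real_inner_self_eq_norm_sq, hunit u]; norm_num
  have hbb : ⟪b, b⟫ = 1 := by rw [real_inner_self_eq_norm_sq, hunit (u.1+1, u.2)]; norm_num
  have hcc : ⟪c, c⟫ = 1 := by rw [real_inner_self_eq_norm_sq, hunit (u.1+1, u.2+1)]; norm_num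
  have hdd : ⟪d, d⟫ = 1 := by rw [real_inner_self_eq_norm_sq, hunit (u.1, u.2+1)]; norm_num
  have hkey := pcen_key a b c d r s t w haa hbb hcc hdd hrel
  -- difference vectors
  have hb' : B - A = r•a - r•b := by rw [e1]; abel
  have hc' : C - A = r•a + (s-r)•b - s•c := by
    rw [e2, e1]
    module
  have hd' : D - A = w•a - w•d := by rw [e4]; abel
  rw [← hb', ← hc', ← hd'] at hkey
  -- the affine dependence
  set k : ℝ := r*s*(w-t) with hk_def
  have hk0 : k ≠ 0 := by
    apply mul_ne_zero (mul_ne_zero hr0 hs0) (sub_ne_zero.2 hwt)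
  set μ : ℝ := -(w*t*(s-r)) * k⁻¹ with hμ_def
  set ν : ℝ := -(w*r*(t-s)) * k⁻¹ with hν_def
  have hI : k•(D-A) + (w*t*(s-r))•(B-A) + (w*r*(t-s))•(C-A) = 0 := by
    rw [hb', hc', hd']
    have h6 : k•(w•a - w•d) + (w*t*(s-r))•(r•a - r•b)
        + (w*r*(t-s))•(r•a + (s-r)•b - s•c)
        = (-(r*s*w)) • ((r-w)•a + (s-r)•b + (t-s)•c + (w-t)•d) := by
      module
    rw [h6, hrel, smul_zero]
  have hDA : D - A = μ•(B - A) + ν•(C - A) := by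
    have h7 : D - A = k⁻¹ • (k • (D - A)) := by
      rw [smul_smul, inv_mul_cancel₀ hk0, one_smul]
    have h8 : k • (D - A) = -((w*t*(s-r))•(B-A)) - (w*r*(t-s))•(C-A) := by
      linear_combination (norm := module) hI
    rw [h7, h8, hμ_def, hν_def]
    match_scalars <;> ring
  have hstar : μ * ‖B-A‖^2 + ν * ‖C-A‖^2 = ‖D-A‖^2 := by
    have hμk : k * μ = -(w*t*(s-r)) := by
      rw [hμ_def, mul_comm, mul_assoc, inv_mul_cancel₀ hk0, mul_one]
    have hνk : k * ν = -(w*r*(t-s)) := by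
      rw [hν_def, mul_comm, mul_assoc, inv_mul_cancel₀ hk0, mul_one]
    apply mul_left_cancel₀ hk0
    linear_combination -hkey + (‖B-A‖^2) * hμk + (‖C-A‖^2) * hνk
  clear_value k μ ν A B C D a b c d
  clear hv00 hv01 hv10 hv11 hprin1 hprin2 hunit hp1 hp2 hq1 hq2 hm1 hm2 hn1 hn2
    hq1' hq2' hm1' hm2' hAB hBC hDC hAD e1 e2 e3 e4 hrel haa hbb hcc hdd
    hb' hc' hd' hI hA_def hB_def hC_def hD_def ha_def hb_def hc_def hd_def
    hk_def hμ_def hν_def hd2 hd4 hd5 hd6 hc2 hc3 hc4 hrs hrw hwt hts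
    hr0 hs0 ht0 hw0 a b c d p q m n x v
  constructor
  · -- Cospherical
    have hb'0 : B - A ≠ 0 := sub_ne_zero.2 (Ne.symm hd1)
    have hnb : ‖B - A‖ ≠ 0 := norm_ne_zero_iff.2 hb'0
    set G11 : ℝ := ‖B - A‖^2 with hG11
    set G22 : ℝ := ‖C - A‖^2 with hG22
    set G12 : ℝ := ⟪B - A, C - A⟫ with hG12
    have hdet : G11*G22 - G12^2 ≠ 0 := by
      intro hzero
      apply hc1
      have hsq : G12^2 = (‖B - A‖*‖C - A‖)^2 := by
        rw [hG11, hG22] at hzero; nlinarith [hzero]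
      have habs := abs_eq_abs.1 ((sq_eq_sq_iff_abs_eq_abs _ _).1 hsq)
      have hcol : ∃ kk : ℝ, C - A = kk • (B - A) := by
        rcases habs with h | h
        · have h2 := inner_eq_norm_mul_iff_real.1 h
          refine ⟨‖C - A‖/‖B - A‖, ?_⟩
          rw [div_eq_mul_inv, mul_comm ‖C - A‖ ‖B - A‖⁻¹, mul_smul, h2,
            smul_smul, inv_mul_cancel₀ hnb, one_smul]
        · have h3 : ⟪B - A, -(C - A)⟫ = ‖B - A‖ * ‖-(C - A)‖ := by
            rw [inner_neg_right, norm_neg, ← hG12, h]; ring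
          have h2 := inner_eq_norm_mul_iff_real.1 h3
          rw [norm_neg] at h2
          refine ⟨-(‖C - A‖/‖B - A‖), ?_⟩
          rw [neg_smul, div_eq_mul_inv, mul_comm ‖C - A‖ ‖B - A‖⁻¹, mul_smul, h2,
            smul_smul, inv_mul_cancel₀ hnb, one_smul, neg_neg]
        -- end
      obtain ⟨kk, hkk⟩ := hcol
      rw [collinear_iff_of_mem (Set.mem_insert A {B, C})]
      refine ⟨B - A, ?_⟩
      intro P hP
      rcases hP with h | h | h
      · exact ⟨0, by rw [h, zero_smul, zero_vadd]⟩
      · exact ⟨1, by rw [h, one_smul, vadd_eq_add, sub_add_cancel]⟩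
      · rw [Set.mem_singleton_iff] at h
        exact ⟨kk, by rw [h, vadd_eq_add, ← hkk, sub_add_cancel]⟩
    set xo : ℝ := (G22*(G11-G12))/(2*(G11*G22-G12^2)) with hxo
    set yo : ℝ := (G11*(G22-G12))/(2*(G11*G22-G12^2)) with hyo
    set o : EuclideanSpace ℝ (Fin 3) := A + xo•(B-A) + yo•(C-A) with ho_def
    have hoA : o - A = xo•(B-A) + yo•(C-A) := by rw [ho_def]; abel
    have ho1 : ⟪o - A, B - A⟫ = G11/2 := by
      rw [hoA, inner_add_left, real_inner_smul_left, real_inner_smul_left,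
        real_inner_self_eq_norm_sq, real_inner_comm (B-A) (C-A), ← hG12, ← hG11,
        hxo, hyo]
      field_simp
      rw [div_eq_iff (by rw [mul_comm G22 G11]; exact hdet)]
      ring
    have ho2 : ⟪o - A, C - A⟫ = G22/2 := by
      rw [hoA, inner_add_left, real_inner_smul_left, real_inner_smul_left,
        real_inner_self_eq_norm_sq, ← hG12, ← hG22, hxo, hyo]
      field_simp
      rw [div_eq_iff (by rw [mul_comm G22 G11]; exact hdet)]
      ring
    have ho3 : ⟪o - A, D - A⟫ = ‖D - A‖^2/2 := by
      calc ⟪o - A, D - A⟫ = ⟪o - A, μ•(B-A) + ν•(C-A)⟫ := by rw [← hDA]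
        _ = μ*(G11/2) + ν*(G22/2) := by
            rw [inner_add_right, real_inner_smul_right, real_inner_smul_right, ho1, ho2]
        _ = (μ*G11 + ν*G22)/2 := by ring
        _ = ‖D - A‖^2/2 := by rw [hstar]
    have dist_eq : ∀ P : EuclideanSpace ℝ (Fin 3),
        ⟪o - A, P - A⟫ = ‖P - A‖^2/2 → dist P o = dist A o := by
      intro P hP
      rw [dist_eq_norm, dist_eq_norm]
      have h1 : P - o = (P - A) - (o - A) := by abel
      have h2 : A - o = -(o - A) := by abel
      have h3 : ‖P - o‖^2 = ‖A - o‖^2 := by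
        rw [h1, h2, norm_neg, norm_sub_sq_real, real_inner_comm (o - A) (P - A), hP]
        ring
      exact (sq_eq_sq₀ (norm_nonneg _) (norm_nonneg _)).1 h3
    refine ⟨o, dist A o, ?_⟩
    rintro P hP
    simp only [Set.mem_insert_iff, Set.mem_singleton_iff] at hP
    rcases hP with h | h | h | h
    · rw [h]
    · rw [h]; exact dist_eq B (by rw [ho1, hG11])
    · rw [h]; exact dist_eq C (by rw [ho2, hG22])
    · rw [h]; exact dist_eq D ho3
  · -- Coplanar
    have hmemA : A ∈ affineSpan ℝ ({A,B,C} : Set (EuclideanSpace ℝ (Fin 3))) :=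
      mem_affineSpan ℝ (by simp)
    have hmemB : B ∈ affineSpan ℝ ({A,B,C} : Set (EuclideanSpace ℝ (Fin 3))) :=
      mem_affineSpan ℝ (by simp)
    have hmemC : C ∈ affineSpan ℝ ({A,B,C} : Set (EuclideanSpace ℝ (Fin 3))) :=
      mem_affineSpan ℝ (by simp)
    have hdir : μ•(B - A) + ν•(C - A)
        ∈ (affineSpan ℝ ({A,B,C} : Set (EuclideanSpace ℝ (Fin 3)))).direction := by
      have hv1 := AffineSubspace.vsub_mem_direction hmemB hmemA
      have hv2 := AffineSubspace.vsub_mem_direction hmemC hmemA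
      rw [vsub_eq_sub] at hv1 hv2
      exact Submodule.add_mem _ (Submodule.smul_mem _ μ hv1) (Submodule.smul_mem _ ν hv2)
    have hmemD : D ∈ affineSpan ℝ ({A,B,C} : Set (EuclideanSpace ℝ (Fin 3))) := by
      have h9 := AffineSubspace.vadd_mem_of_mem_direction hdir hmemA
      have h10 : D = (μ•(B - A) + ν•(C - A)) +ᵥ A := by
        rw [vadd_eq_add, ← hDA]; abel
      rwa [← h10] at h9
    have hset : ({A,B,C,D} : Set (EuclideanSpace ℝ (Fin 3))) = insert D {A,B,C} := by
      ext y; simp only [Set.mem_insert_iff, Set.mem_singleton_iff]; tauto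
    rw [hset]
    exact (coplanar_insert_iff_of_mem_affineSpan hmemD).2 (coplanar_triple (k := ℝ) A B C)
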